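/- Suppose W_down ReLU(W_up x) + x = V_down ReLU(V_up x) for all x ∈ ℝ^d. Then the odd and even parts separate: V_down V_up = W_down W_up + 2I_d, and V_down |V_up x| = W_down |W_up x| for all x ∈ ℝ^d. -/

import Mathlib

theorem relu_absorption_parity_separation
    (d N : ℕ)
    (Wup Vup : Matrix (Fin N) (Fin d) ℝ)
    (Wdown Vdown : Matrix (Fin d) (Fin N) ℝ)
    (habs : ∀ x : Fin d → ℝ,
      Wdown.mulVec (fun i => max 0 (Wup.mulVec x i)) + x
        = Vdown.mulVec (fun i => max 0 (Vup.mulVec x i))) :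
    Vdown * Vup = Wdown * Wup + (2 : ℝ) • (1 : Matrix (Fin d) (Fin d) ℝ) ∧
    ∀ x : Fin d → ℝ,
      Vdown.mulVec (fun i => |Vup.mulVec x i|)
        = Wdown.mulVec (fun i => |Wup.mulVec x i|) := by
  have hmax_add : ∀ z : ℝ, max 0 z + max 0 (-z) = |z| := by
    intro z; rcases le_total 0 z with h | h
    · rw [max_eq_right h, max_eq_left (neg_nonpos.mpr h), abs_of_nonneg h, add_zero]
    · rw [max_eq_left h, max_eq_right (neg_nonneg.mpr h), abs_of_nonpos h, zero_add]
  have hmax_sub : ∀ z : ℝ, max 0 z - max 0 (-z) = z := by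
    intro z; rcases le_total 0 z with h | h
    · rw [max_eq_right h, max_eq_left (neg_nonpos.mpr h), sub_zero]
    · rw [max_eq_left h, max_eq_right (neg_nonneg.mpr h), zero_sub, neg_neg]
  have key : ∀ x : Fin d → ℝ,
      (Vdown.mulVec (fun i => |Vup.mulVec x i|)
        = Wdown.mulVec (fun i => |Wup.mulVec x i|)) ∧
      Vdown.mulVec (Vup.mulVec x) = Wdown.mulVec (Wup.mulVec x) + (2:ℝ) • x := by
    intro x
    have h1 := habs x
    have h2 := habs (-x)
    simp only [Matrix.mulVec_neg, Pi.neg_apply] at h2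
    have hW : Wdown.mulVec (fun i => max 0 (Wup.mulVec x i))
        + Wdown.mulVec (fun i => max 0 (-(Wup.mulVec x i)))
        = Wdown.mulVec (fun i => |Wup.mulVec x i|) := by
      rw [← Matrix.mulVec_add]
      exact congrArg _ (funext fun i => hmax_add _)
    have hV : Vdown.mulVec (fun i => max 0 (Vup.mulVec x i))
        + Vdown.mulVec (fun i => max 0 (-(Vup.mulVec x i)))
        = Vdown.mulVec (fun i => |Vup.mulVec x i|) := by
      rw [← Matrix.mulVec_add]
      exact congrArg _ (funext fun i => hmax_add _)
    have hW' : Wdown.mulVec (fun i => max 0 (Wup.mulVec x i))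
        - Wdown.mulVec (fun i => max 0 (-(Wup.mulVec x i)))
        = Wdown.mulVec (Wup.mulVec x) := by
      rw [← Matrix.mulVec_sub]
      exact congrArg _ (funext fun i => hmax_sub _)
    have hV' : Vdown.mulVec (fun i => max 0 (Vup.mulVec x i))
        - Vdown.mulVec (fun i => max 0 (-(Vup.mulVec x i)))
        = Vdown.mulVec (Vup.mulVec x) := by
      rw [← Matrix.mulVec_sub]
      exact congrArg _ (funext fun i => hmax_sub _)
    constructor
    · funext i
      have e1 := congrFun h1 i
      have e2 := congrFun h2 i
      have eW := congrFun hW i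
      have eV := congrFun hV i
      simp only [Pi.add_apply, Pi.neg_apply] at e1 e2 eW eV
      linarith
    · funext i
      have e1 := congrFun h1 i
      have e2 := congrFun h2 i
      have eW := congrFun hW' i
      have eV := congrFun hV' i
      simp only [Pi.add_apply, Pi.sub_apply, Pi.neg_apply, Pi.smul_apply,
        smul_eq_mul] at e1 e2 eW eV ⊢
      linarith
  refine ⟨?_, fun x => (key x).1⟩
  ext i j
  have h := (key (Pi.single j 1)).2
  simp only [Matrix.mulVec_mulVec] at h
  have hij := congrFun h i
  simp only [Matrix.mulVec_single, mul_one, Pi.add_apply, Pi.smul_apply,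
    smul_eq_mul, Pi.single_apply, MulOpposite.op_one, one_smul, Matrix.col_apply] at hij
  simp only [Matrix.add_apply, Matrix.smul_apply, Matrix.one_apply, smul_eq_mul, hij]
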